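/- The expectation of the debiased matrix S_r satisfies: for all i ≠ j in [n_r], E[S_r(i,j)] = S̃_r(i,j), and for every i ∈ [n_r], E[S_r(i,i)] = S̃_r(i,i) − Σ_{l=1}^L Σ_{m=1}^{n_c} Ω_l(i,m)^2. Equivalently, E[S_r] = S̃_r − R2 where R2 is the n_r × n_r diagonal matrix with R2(i,i) = Σ_{l=1}^L Σ_{m=1}^{n_c} Ω_l(i,m)^2. -/

import Mathlib

open Matrix Finset MeasureTheory ProbabilityTheory

/-- expectation of the debiased matrix `S_r`.
Under the multi-layer DC-ScBM, the off-diagonal entries of `E[S_r]` equal those of `S̃_r`,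
and the diagonal entries satisfy `E[S_r(i,i)] = S̃_r(i,i) − ∑_l ∑_m Ω_l(i,m)²`. -/
theorem stmt5
    (nr nc Kr Kc L : ℕ)
    (hnr : 0 < nr) (hnc : 0 < nc) (hKr : 0 < Kr) (hKc : 0 < Kc) (hL : 0 < L)
    (Zr : Matrix (Fin nr) (Fin Kr) ℝ) (Zc : Matrix (Fin nc) (Fin Kc) ℝ)
    (hZr01 : ∀ i k, Zr i k = 0 ∨ Zr i k = 1)
    (hZrrow : ∀ i, ∃! k, Zr i k = 1)
    (hZrcol : ∀ k, ∃ i, Zr i k = 1)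
    (hZc01 : ∀ j k, Zc j k = 0 ∨ Zc j k = 1)
    (hZcrow : ∀ j, ∃! k, Zc j k = 1)
    (hZccol : ∀ k, ∃ j, Zc j k = 1)
    (θr : Fin nr → ℝ) (θc : Fin nc → ℝ)
    (hθr : ∀ i, 0 < θr i ∧ θr i ≤ 1) (hθc : ∀ j, 0 < θc j ∧ θc j ≤ 1)
    (B : Fin L → Matrix (Fin Kr) (Fin Kc) ℝ)
    (hB01 : ∀ l k k', 0 ≤ B l k k' ∧ B l k k' ≤ 1)
    (Ωm : Fin L → Matrix (Fin nr) (Fin nc) ℝ)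
    (hΩm : ∀ l, Ωm l = Matrix.diagonal θr * Zr * B l * (Zc)ᵀ * Matrix.diagonal θc)
    (Str : Matrix (Fin nr) (Fin nr) ℝ)
    (hStr : Str = ∑ l, Ωm l * (Ωm l)ᵀ)
    -- the random adjacency matrices
    (Ω' : Type) [MeasurableSpace Ω'] (μ : Measure Ω') [IsProbabilityMeasure μ]
    (A : Fin L → Ω' → Matrix (Fin nr) (Fin nc) ℝ)
    (hA01 : ∀ l ω i j, A l ω i j = 0 ∨ A l ω i j = 1)
    (hAmeas : ∀ l i j, Measurable (fun ω => A l ω i j))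
    (hABer : ∀ l i j, μ {ω | A l ω i j = 1} = ENNReal.ofReal (Ωm l i j))
    (hAindep : iIndepFun
      (fun p : Fin L × Fin nr × Fin nc => fun ω => A p.1 ω p.2.1 p.2.2) μ)
    -- the debiased matrix `S_r`
    (Sr : Ω' → Matrix (Fin nr) (Fin nr) ℝ)
    (hSr : ∀ ω, Sr ω = ∑ l, (A l ω * (A l ω)ᵀ
      - Matrix.diagonal (fun i => ∑ j, A l ω i j))) :
    (∀ i j : Fin nr, i ≠ j → (∫ ω, Sr ω i j ∂μ) = Str i j) ∧
    (∀ i : Fin nr, (∫ ω, Sr ω i i ∂μ) = Str i i - ∑ l, ∑ m, (Ωm l i m) ^ 2) := by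
  -- nonnegativity of the entries of Ωm
  have hΩnn : ∀ l i j, 0 ≤ Ωm l i j := by
    intro l i j
    have hentry : Ωm l i j = θr i * ((Zr * B l * Zcᵀ) i j) * θc j := by
      rw [hΩm, Matrix.mul_diagonal, Matrix.mul_assoc (Matrix.diagonal θr),
        Matrix.mul_assoc (Matrix.diagonal θr), Matrix.diagonal_mul, mul_assoc]
    rw [hentry]
    have h1 : 0 ≤ (Zr * B l * Zcᵀ) i j := by
      rw [Matrix.mul_apply]
      refine Finset.sum_nonneg fun m _ => mul_nonneg ?_ ?_
      · rw [Matrix.mul_apply]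
        refine Finset.sum_nonneg fun k _ => mul_nonneg ?_ (hB01 l k m).1
        rcases hZr01 i k with h | h <;> simp [h]
      · rcases hZc01 j m with h | h <;> simp [Matrix.transpose_apply, h]
    exact mul_nonneg (mul_nonneg (hθr i).1.le h1) (hθc j).1.le
  -- the event sets
  set P : Fin L → Fin nr → Fin nc → Set Ω' :=
    fun l i m => (fun ω => A l ω i m) ⁻¹' {1} with hP
  have hPmeas : ∀ l i m, MeasurableSet (P l i m) :=
    fun l i m => (hAmeas l i m) (measurableSet_singleton 1)
  have hμP : ∀ l i m, μ (P l i m) = ENNReal.ofReal (Ωm l i m) := by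
    intro l i m
    have : P l i m = {ω | A l ω i m = 1} := by ext ω; simp [hP]
    rw [this, hABer]
  -- product of entries as an indicator
  have hprodind : ∀ l (i j : Fin nr) m, (fun ω => A l ω i m * A l ω j m) =
      (P l i m ∩ P l j m).indicator (fun _ => (1 : ℝ)) := by
    intro l i j m
    funext ω
    rcases hA01 l ω i m with h1 | h1 <;> rcases hA01 l ω j m with h2 | h2 <;>
      simp [Set.indicator_apply, hP, Set.mem_preimage, h1, h2]
  have hIntProd : ∀ l (i j : Fin nr) m,
      Integrable (fun ω => A l ω i m * A l ω j m) μ := by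
    intro l i j m
    rw [hprodind]
    exact (integrable_const (1 : ℝ)).indicator ((hPmeas l i m).inter (hPmeas l j m))
  -- expectation of products, for distinct rows
  have hEprod : ∀ l (i j : Fin nr) m, i ≠ j →
      ∫ ω, A l ω i m * A l ω j m ∂μ = Ωm l i m * Ωm l j m := by
    intro l i j m hij
    rw [hprodind, integral_indicator_const _ ((hPmeas l i m).inter (hPmeas l j m)),
      smul_eq_mul, mul_one]
    have hne : ((l, i, m) : Fin L × Fin nr × Fin nc) ≠ (l, j, m) := by
      simp [Prod.ext_iff, hij]
    have hind := hAindep.indepFun hne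
    have := hind.measure_inter_preimage_eq_mul (s := {1}) (t := {1})
      (measurableSet_singleton 1) (measurableSet_singleton 1)
    rw [show P l i m ∩ P l j m =
        ((fun p : Fin L × Fin nr × Fin nc => fun ω => A p.1 ω p.2.1 p.2.2) (l, i, m)) ⁻¹' {1} ∩
        ((fun p : Fin L × Fin nr × Fin nc => fun ω => A p.1 ω p.2.1 p.2.2) (l, j, m)) ⁻¹' {1}
      from rfl, measureReal_def, this]
    rw [show ((fun p : Fin L × Fin nr × Fin nc => fun ω => A p.1 ω p.2.1 p.2.2) (l, i, m)) ⁻¹' {1}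
      = P l i m from rfl,
      show ((fun p : Fin L × Fin nr × Fin nc => fun ω => A p.1 ω p.2.1 p.2.2) (l, j, m)) ⁻¹' {1}
      = P l j m from rfl, hμP, hμP, ENNReal.toReal_mul,
      ENNReal.toReal_ofReal (hΩnn l i m), ENNReal.toReal_ofReal (hΩnn l j m)]
  constructor
  · -- off-diagonal entries
    intro i j hij
    have hrw : (fun ω => Sr ω i j) = fun ω => ∑ l, ∑ m, A l ω i m * A l ω j m := by
      funext ω
      rw [hSr]
      simp [Matrix.sum_apply, Matrix.sub_apply, Matrix.mul_apply, Matrix.transpose_apply,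
        Matrix.diagonal_apply_ne _ hij]
    rw [hrw, integral_finset_sum _
      (fun l _ => integrable_finset_sum _ (fun m _ => hIntProd l i j m))]
    rw [hStr]
    simp only [Matrix.sum_apply, Matrix.mul_apply, Matrix.transpose_apply]
    refine Finset.sum_congr rfl fun l _ => ?_
    rw [integral_finset_sum _ (fun m _ => hIntProd l i j m)]
    exact Finset.sum_congr rfl fun m _ => hEprod l i j m hij
  · -- diagonal entries
    intro i
    have hdiag : ∀ ω, Sr ω i i = 0 := by
      intro ω
      rw [hSr]
      simp only [Matrix.sum_apply, Matrix.sub_apply, Matrix.mul_apply,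
        Matrix.transpose_apply, Matrix.diagonal_apply_eq]
      refine Finset.sum_eq_zero fun l _ => ?_
      rw [sub_eq_zero]
      refine Finset.sum_congr rfl fun m _ => ?_
      rcases hA01 l ω i m with h | h <;> simp [h]
    have h0 : (∫ ω, Sr ω i i ∂μ) = 0 := by simp [hdiag]
    rw [h0]
    symm
    rw [sub_eq_zero, hStr]
    simp only [Matrix.sum_apply, Matrix.mul_apply, Matrix.transpose_apply, sq]
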